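/- The tree-ordering ⊴ on the addition-free theta-term system T_n is order-isomorphic to the set of finite 'bar' sequences over {0,...,n-1} with the strong gap-embeddability relation, via the map sending 0 to the empty sequence and ϑ_i α to i followed by the image of α. -/

import Mathlib

/-- Addition-free theta terms. -/
inductive TTerm : Type
  | zero : TTerm
  | theta : ℕ → TTerm → TTerm
  deriving DecidableEq

namespace TTerm

/-- `S 0 = -1`, `S (ϑ_i α) = i`. -/
def S : TTerm → ℤ
  | zero => -1
  | theta i _ => i

/-- Membership in the term system `T`: `ϑ_i α` is formed only when `S α ≤ i + 1`. -/
inductive WF : TTerm → Prop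
  | zero : WF zero
  | theta {i : ℕ} {a : TTerm} : WF a → S a ≤ (i : ℤ) + 1 → WF (theta i a)

/-- Coefficients `k_i`. -/
def k (i : ℕ) : TTerm → TTerm
  | zero => zero
  | theta j b => if j ≤ i then theta j b else k i b

mutual
/-- The linear order on theta terms. -/
inductive Lt : TTerm → TTerm → Prop
  | zero {a : TTerm} : a ≠ zero → Lt zero a
  | idx {i j : ℕ} {a b : TTerm} : i < j → Lt (theta i a) (theta j b)
  | left {i : ℕ} {a b : TTerm} : Lt a b → Lt (k i a) (theta i b) →
      Lt (theta i a) (theta i b)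
  | right {i : ℕ} {a b : TTerm} : Lt b a → Le (theta i a) (k i b) →
      Lt (theta i a) (theta i b)

inductive Le : TTerm → TTerm → Prop
  | refl {a : TTerm} : Le a a
  | of_lt {a b : TTerm} : Lt a b → Le a b
end

end TTerm

/-- The tree-ordering `⊴` on theta terms. -/
inductive TTerm.Sub : TTerm → TTerm → Prop
  | zero {a : TTerm} : TTerm.Sub TTerm.zero a
  | coeff {i : ℕ} {a b : TTerm} : TTerm.Sub a (TTerm.k i b) → TTerm.Sub a (TTerm.theta i b)
  | mono {i : ℕ} {a b : TTerm} : TTerm.Sub a b → TTerm.Sub (TTerm.theta i a) (TTerm.theta i b)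

/-- All indices occurring in a term are `< n`. -/
def TTerm.idxBound (n : ℕ) : TTerm → Prop
  | TTerm.zero => True
  | TTerm.theta i a => i < n ∧ TTerm.idxBound n a

/-- Membership in `T_n`. -/
def TTerm.memT (n : ℕ) (t : TTerm) : Prop := TTerm.WF t ∧ TTerm.idxBound n t

/-- The strong gap-embeddability relation on finite sequences of naturals. -/
def gapS (s t : List ℕ) : Prop :=
  ∃ f : Fin s.length → Fin t.length, StrictMono f ∧
    (∀ i : Fin s.length, s.get i = t.get (f i)) ∧
    (∀ i : Fin s.length, ∀ hi : (i : ℕ) + 1 < s.length, ∀ j : Fin t.length,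
      f i < j → j < f ⟨(i : ℕ) + 1, hi⟩ → s.get ⟨(i : ℕ) + 1, hi⟩ ≤ t.get j) ∧
    (∀ hs : 0 < s.length, ∀ j : Fin t.length, j < f ⟨0, hs⟩ → s.get ⟨0, hs⟩ ≤ t.get j)

/-- Membership in the set of bar sequences `S̄_n`. -/
def barSeq (n : ℕ) (l : List ℕ) : Prop :=
  (∀ x ∈ l, x < n) ∧
    ∀ i : ℕ, ∀ h : i + 1 < l.length,
      l.get ⟨i + 1, h⟩ ≤ l.get ⟨i, Nat.lt_of_succ_lt h⟩ + 1

/-- The map sending `0` to the empty sequence and `ϑ_i α` to `i` followed by `e α`. -/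
def TTerm.toSeq : TTerm → List ℕ
  | TTerm.zero => []
  | TTerm.theta i a => i :: TTerm.toSeq a

/-! ### Auxiliary development -/

/-- Recursive form of strong gap-embeddability. -/
def Emb : List ℕ → List ℕ → Prop
  | [], _ => True
  | _ :: _, [] => False
  | i :: s, j :: t => (i = j ∧ Emb s t) ∨ (i ≤ j ∧ Emb (i :: s) t)

lemma emb_nil (t : List ℕ) : Emb [] t := by cases t <;> trivial

lemma emb_headle : ∀ (b : TTerm) (i : ℕ) (s : List ℕ) (j : ℕ),
    Emb (i :: s) (TTerm.k j b).toSeq → i ≤ j ∧ Emb (i :: s) b.toSeq := by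
  intro b
  induction b with
  | zero => intro i s j h; exact absurd h (by simp [TTerm.k, TTerm.toSeq, Emb])
  | theta m c ih =>
    intro i s j h
    by_cases hmj : m ≤ j
    · simp only [TTerm.k, if_pos hmj] at h
      refine ⟨?_, h⟩
      simp only [TTerm.toSeq, Emb] at h
      rcases h with ⟨rfl, _⟩ | ⟨him, _⟩
      · exact hmj
      · exact le_trans him hmj
    · simp only [TTerm.k, if_neg hmj] at h
      obtain ⟨hij, hemb⟩ := ih i s j h
      exact ⟨hij, Or.inr ⟨by omega, hemb⟩⟩

lemma sub_emb {a b : TTerm} (h : TTerm.Sub a b) : Emb a.toSeq b.toSeq := by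
  induction h with
  | zero => exact emb_nil _
  | @coeff i a b _ ih =>
    cases a with
    | zero => exact emb_nil _
    | theta m c =>
      obtain ⟨hmi, hemb⟩ := emb_headle b m c.toSeq i ih
      exact Or.inr ⟨hmi, hemb⟩
  | mono _ ih => exact Or.inl ⟨rfl, ih⟩

lemma emb_k_of : ∀ (b : TTerm) (i : ℕ) (s : List ℕ) (j : ℕ), i ≤ j →
    Emb (i :: s) b.toSeq → Emb (i :: s) (TTerm.k j b).toSeq := by
  intro b
  induction b with
  | zero => intro i s j _ h; exact absurd h (by simp [TTerm.toSeq, Emb])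
  | theta m c ih =>
    intro i s j hij h
    by_cases hmj : m ≤ j
    · simpa only [TTerm.k, if_pos hmj] using h
    · simp only [TTerm.k, if_neg hmj]
      simp only [TTerm.toSeq, Emb] at h
      rcases h with ⟨rfl, _⟩ | ⟨_, hemb⟩
      · omega
      · exact ih i s j hij hemb

/-- Height of a term. -/
def ht : TTerm → ℕ
  | TTerm.zero => 0
  | TTerm.theta _ a => ht a + 1

lemma ht_k (j : ℕ) : ∀ b : TTerm, ht (TTerm.k j b) ≤ ht b := by
  intro b
  induction b with
  | zero => simp [TTerm.k]
  | theta m c ih =>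
    by_cases hmj : m ≤ j
    · simp [TTerm.k, if_pos hmj]
    · simp only [TTerm.k, if_neg hmj, ht]
      omega

lemma emb_sub : ∀ (b a : TTerm), Emb a.toSeq b.toSeq → TTerm.Sub a b := by
  have key : ∀ (N : ℕ) (b a : TTerm), ht b ≤ N → Emb a.toSeq b.toSeq → TTerm.Sub a b := by
    intro N
    induction N with
    | zero =>
      intro b a hb h
      cases b with
      | zero =>
        cases a with
        | zero => exact TTerm.Sub.zero
        | theta i a' => exact absurd h (by simp [TTerm.toSeq, Emb])
      | theta j b' => simp [ht] at hb
    | succ N ih =>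
      intro b a hb h
      cases a with
      | zero => exact TTerm.Sub.zero
      | theta i a' =>
        cases b with
        | zero => exact absurd h (by simp [TTerm.toSeq, Emb])
        | theta j b' =>
          simp only [TTerm.toSeq, Emb] at h
          simp only [ht] at hb
          rcases h with ⟨rfl, hemb⟩ | ⟨hij, hemb⟩
          · exact TTerm.Sub.mono (ih b' a' (by omega) hemb)
          · exact TTerm.Sub.coeff
              (ih (TTerm.k j b') (TTerm.theta i a')
                (le_trans (ht_k j b') (by omega))
                (emb_k_of b' i a'.toSeq j hij hemb))
  exact fun b a h => key (ht b) b a le_rfl h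

/-! ### gapS lemmas -/

lemma get_cons_succ' {x : ℕ} {l : List ℕ} (m : Fin l.length) :
    (x :: l).get m.succ = l.get m := by
  simp [List.get_eq_getElem, Fin.val_succ]

lemma get_cons_zero_val {x : ℕ} {l : List ℕ} (m : Fin (x :: l).length)
    (hm : (m : ℕ) = 0) : (x :: l).get m = x := by
  simp [List.get_eq_getElem, hm]

lemma get_cons_ne {x : ℕ} {l : List ℕ} (m : Fin (x :: l).length) (hm : (m : ℕ) ≠ 0)
    (h' : (m : ℕ) - 1 < l.length) :
    (x :: l).get m = l.get ⟨(m : ℕ) - 1, h'⟩ := by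
  rcases m with ⟨mv, hmv⟩
  cases mv with
  | zero => simp at hm
  | succ kk => simp [List.get_eq_getElem]

lemma gapS_nil (t : List ℕ) : gapS [] t :=
  ⟨fun x => x.elim0, fun x => x.elim0, fun x => x.elim0, fun x => x.elim0,
    fun hs => absurd hs (by simp)⟩

lemma not_gapS_cons_nil (i : ℕ) (s : List ℕ) : ¬ gapS (i :: s) [] := by
  rintro ⟨f, -⟩
  exact (f ⟨0, Nat.succ_pos _⟩).elim0

lemma gapS_match {i : ℕ} {s t : List ℕ} (h : gapS s t) : gapS (i :: s) (i :: t) := by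
  obtain ⟨f, hmono, hget, hbet, hfirst⟩ := h
  refine ⟨fun m => if hm : (m : ℕ) = 0 then ⟨0, Nat.succ_pos _⟩
      else (f ⟨(m : ℕ) - 1, by
        have := m.isLt; simp only [List.length_cons] at this; omega⟩).succ,
      ?_, ?_, ?_, ?_⟩
  · -- StrictMono
    intro a b hab
    rw [Fin.lt_def] at hab
    dsimp only
    by_cases ha : (a : ℕ) = 0 <;> by_cases hb : (b : ℕ) = 0
    · omega
    · rw [dif_pos ha, dif_neg hb, Fin.lt_def, Fin.val_succ]
      simp only [Fin.val_mk]
      omega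
    · omega
    · rw [dif_neg ha, dif_neg hb]
      refine Fin.succ_lt_succ_iff.mpr (hmono ?_)
      rw [Fin.mk_lt_mk]
      omega
  · -- values
    intro m
    dsimp only
    by_cases hm : (m : ℕ) = 0
    · rw [dif_pos hm, get_cons_zero_val m hm, get_cons_zero_val _ (Fin.val_mk _)]
    · have h' : (m : ℕ) - 1 < s.length := by
        have := m.isLt; simp only [List.length_cons] at this; omega
      rw [dif_neg hm, get_cons_succ', get_cons_ne m hm h']
      exact hget _
  · -- gap condition
    intro m hm jj h1 h2
    dsimp only at h1 h2 ⊢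
    have hm' : (m : ℕ) + 1 < s.length + 1 := by simpa using hm
    have hjj' : (jj : ℕ) < t.length + 1 := by have := jj.isLt; simpa using this
    have hne2 : ¬ ((⟨(m : ℕ) + 1, hm⟩ : Fin (i :: s).length) : ℕ) = 0 := by
      rw [Fin.val_mk]; omega
    rw [dif_neg hne2] at h2
    try simp only [Fin.val_mk] at h2
    by_cases hm0 : (m : ℕ) = 0
    · rw [dif_pos hm0] at h1
      rw [Fin.lt_def] at h1
      try simp only [Fin.val_mk] at h1
      have e0 : 0 < s.length := by omega
      rw [show (⟨(m : ℕ) + 1 - 1, by omega⟩ : Fin s.length) = ⟨0, e0⟩ from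
        Fin.ext (by (try simp only [Fin.val_mk]) <;> omega)] at h2
      rw [Fin.lt_def, Fin.val_succ] at h2
      have hjne : (jj : ℕ) ≠ 0 := by omega
      have hjlt : (jj : ℕ) - 1 < t.length := by omega
      rw [get_cons_ne _ hne2 (by (try simp only [Fin.val_mk]) <;> omega),
        get_cons_ne jj hjne hjlt]
      rw [show (⟨((⟨(m : ℕ) + 1, hm⟩ : Fin (i :: s).length) : ℕ) - 1, by
          (try simp only [Fin.val_mk]) <;> omega⟩ : Fin s.length) = ⟨0, e0⟩ from
          Fin.ext (by (try simp only [Fin.val_mk]) <;> omega)]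
      exact hfirst e0 ⟨(jj : ℕ) - 1, hjlt⟩
        (by rw [Fin.lt_def]; (try simp only [Fin.val_mk]) <;> omega)
    · rw [dif_neg hm0] at h1
      rw [Fin.lt_def, Fin.val_succ] at h1
      have e1 : (m : ℕ) - 1 < s.length := by omega
      have e2 : (m : ℕ) - 1 + 1 < s.length := by omega
      rw [show (⟨(m : ℕ) + 1 - 1, by omega⟩ : Fin s.length) = ⟨(m : ℕ) - 1 + 1, e2⟩ from
        Fin.ext (by (try simp only [Fin.val_mk]) <;> omega)] at h2
      rw [Fin.lt_def, Fin.val_succ] at h2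
      have hjne : (jj : ℕ) ≠ 0 := by omega
      have hjlt : (jj : ℕ) - 1 < t.length := by omega
      have hi2 : ((⟨(m : ℕ) - 1, e1⟩ : Fin s.length) : ℕ) + 1 < s.length := by
        (try simp only [Fin.val_mk]) <;> omega
      have key := hbet ⟨(m : ℕ) - 1, e1⟩ hi2 ⟨(jj : ℕ) - 1, hjlt⟩
        (by rw [Fin.lt_def]; (try simp only [Fin.val_mk]) <;> omega)
        (by rw [Fin.lt_def]; (try simp only [Fin.val_mk]) <;> omega)
      rw [get_cons_ne _ hne2 (by (try simp only [Fin.val_mk]) <;> omega),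
        get_cons_ne jj hjne hjlt]
      rw [show (⟨((⟨(m : ℕ) + 1, hm⟩ : Fin (i :: s).length) : ℕ) - 1, by
          (try simp only [Fin.val_mk]) <;> omega⟩ : Fin s.length)
          = ⟨((⟨(m : ℕ) - 1, e1⟩ : Fin s.length) : ℕ) + 1, hi2⟩ from
          Fin.ext (by (try simp only [Fin.val_mk]) <;> omega)]
      exact key
  · -- initial condition
    intro hs jj hjj
    dsimp only at hjj
    rw [dif_pos (Fin.val_mk _ : ((⟨0, hs⟩ : Fin (i :: s).length) : ℕ) = 0)] at hjj
    exact absurd hjj (by rw [Fin.lt_def]; (try simp only [Fin.val_mk]) <;> omega)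

lemma gapS_skip {i j : ℕ} {s t : List ℕ} (hij : i ≤ j) (h : gapS (i :: s) t) :
    gapS (i :: s) (j :: t) := by
  obtain ⟨f, hmono, hget, hbet, hfirst⟩ := h
  refine ⟨fun m => (f m).succ, ?_, ?_, ?_, ?_⟩
  · intro a b hab
    exact Fin.succ_lt_succ_iff.mpr (hmono hab)
  · intro m
    dsimp only
    rw [get_cons_succ']
    exact hget m
  · intro m hm jj h1 h2
    dsimp only at h1 h2
    rw [Fin.lt_def, Fin.val_succ] at h1 h2
    have hjne : (jj : ℕ) ≠ 0 := by omega
    have hjlt : (jj : ℕ) - 1 < t.length := by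
      have := jj.isLt; simp only [List.length_cons] at this; omega
    rw [get_cons_ne jj hjne hjlt]
    exact hbet m hm ⟨(jj : ℕ) - 1, hjlt⟩
      (by rw [Fin.lt_def]; (try simp only [Fin.val_mk]) <;> omega)
      (by rw [Fin.lt_def]; (try simp only [Fin.val_mk]) <;> omega)
  · intro hs jj hjj
    dsimp only at hjj
    rw [Fin.lt_def, Fin.val_succ] at hjj
    by_cases hjz : (jj : ℕ) = 0
    · rw [get_cons_zero_val jj hjz, get_cons_zero_val ⟨0, hs⟩ (Fin.val_mk _)]
      exact hij
    · have hjlt : (jj : ℕ) - 1 < t.length := by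
        have := jj.isLt; simp only [List.length_cons] at this; omega
      rw [get_cons_ne jj hjz hjlt]
      exact hfirst hs ⟨(jj : ℕ) - 1, hjlt⟩
        (by rw [Fin.lt_def]; (try simp only [Fin.val_mk]) <;> omega)

lemma gapS_cases {i j : ℕ} {s t : List ℕ} (h : gapS (i :: s) (j :: t)) :
    (i = j ∧ gapS s t) ∨ (i ≤ j ∧ gapS (i :: s) t) := by
  obtain ⟨f, hmono, hget, hbet, hfirst⟩ := h
  have hs0 : 0 < (i :: s).length := Nat.succ_pos _
  have hflt : ∀ m : Fin (i :: s).length, ((f m : Fin (j :: t).length) : ℕ) < t.length + 1 :=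
    fun m => by have := (f m).isLt; simpa using this
  by_cases h0 : ((f ⟨0, hs0⟩ : Fin (j :: t).length) : ℕ) = 0
  · -- heads matched
    left
    have hij : i = j := by
      have h1 := hget ⟨0, hs0⟩
      rw [get_cons_zero_val _ (Fin.val_mk _), get_cons_zero_val _ h0] at h1
      exact h1
    refine ⟨hij, ?_⟩
    have hb1 : ∀ m : Fin s.length, (m : ℕ) + 1 < (i :: s).length := fun m => by
      have := m.isLt; simp only [List.length_cons]; omega
    have hpos : ∀ m : Fin s.length,
        0 < ((f ⟨(m : ℕ) + 1, hb1 m⟩ : Fin (j :: t).length) : ℕ) := by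
      intro m
      have hlt := hmono (show (⟨0, hs0⟩ : Fin (i :: s).length) < ⟨(m : ℕ) + 1, hb1 m⟩ from by
        rw [Fin.mk_lt_mk]; omega)
      rw [Fin.lt_def] at hlt
      omega
    refine ⟨fun m => ⟨((f ⟨(m : ℕ) + 1, hb1 m⟩ : Fin (j :: t).length) : ℕ) - 1, by
      have := hflt ⟨(m : ℕ) + 1, hb1 m⟩; have := hpos m; omega⟩, ?_, ?_, ?_, ?_⟩
    · intro a b hab
      rw [Fin.lt_def] at hab
      dsimp only
      rw [Fin.lt_def]
      simp only [Fin.val_mk]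
      have hlt := hmono (show (⟨(a : ℕ) + 1, hb1 a⟩ : Fin (i :: s).length)
          < ⟨(b : ℕ) + 1, hb1 b⟩ from by rw [Fin.mk_lt_mk]; omega)
      rw [Fin.lt_def] at hlt
      have := hpos a
      omega
    · intro m
      dsimp only
      have h1 := hget ⟨(m : ℕ) + 1, hb1 m⟩
      rw [get_cons_ne _ (by (try simp only [Fin.val_mk]) <;> omega) (by
          (try simp only [Fin.val_mk]) <;> (have := m.isLt; omega))] at h1
      rw [get_cons_ne (f ⟨(m : ℕ) + 1, hb1 m⟩) (by have := hpos m; omega) (by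
          have := hflt ⟨(m : ℕ) + 1, hb1 m⟩; have := hpos m; omega)] at h1
      rw [show (⟨((⟨(m : ℕ) + 1, hb1 m⟩ : Fin (i :: s).length) : ℕ) - 1, by
          (try simp only [Fin.val_mk]) <;> (have := m.isLt; omega)⟩ : Fin s.length) = m from
          Fin.ext (by (try simp only [Fin.val_mk]) <;> omega)] at h1
      exact h1
    · intro m hm jj h1 h2
      dsimp only at h1 h2
      rw [Fin.lt_def] at h1 h2
      try simp only [Fin.val_mk] at h1 h2
      have hjlt' : (jj : ℕ) < t.length := jj.isLt
      have hjne : (jj : ℕ) + 1 < t.length + 1 := by omega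
      have hp1 := hpos m
      have hp2 := hpos ⟨(m : ℕ) + 1, hm⟩
      try simp only [Fin.val_mk] at hp2
      have hi2 : ((⟨(m : ℕ) + 1, hb1 m⟩ : Fin (i :: s).length) : ℕ) + 1
          < (i :: s).length := by
        (try simp only [Fin.val_mk, List.length_cons]) <;> omega
      have key := hbet ⟨(m : ℕ) + 1, hb1 m⟩ hi2 jj.succ
        (by rw [Fin.lt_def, Fin.val_succ]; omega)
        (by rw [Fin.lt_def, Fin.val_succ]; (try simp only [Fin.val_mk]) <;> omega)
      rw [get_cons_succ'] at key
      rw [get_cons_ne _ (by (try simp only [Fin.val_mk]) <;> omega) (by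
          (try simp only [Fin.val_mk]) <;> omega)] at key
      rw [show (⟨((⟨((⟨(m : ℕ) + 1, hb1 m⟩ : Fin (i :: s).length) : ℕ) + 1, hi2⟩ :
          Fin (i :: s).length) : ℕ) - 1, by (try simp only [Fin.val_mk]) <;> omega⟩ : Fin s.length)
          = ⟨(m : ℕ) + 1, hm⟩ from Fin.ext (by (try simp only [Fin.val_mk]) <;> omega)] at key
      exact key
    · intro hs jj hjj
      dsimp only at hjj
      rw [Fin.lt_def] at hjj
      try simp only [Fin.val_mk] at hjj
      have hp2 := hpos ⟨0, hs⟩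
      try simp only [Fin.val_mk] at hp2
      have hi1 : ((⟨0, hs0⟩ : Fin (i :: s).length) : ℕ) + 1 < (i :: s).length := by
        (try simp only [Fin.val_mk, List.length_cons]) <;> omega
      have key := hbet ⟨0, hs0⟩ hi1 jj.succ
        (by rw [Fin.lt_def, Fin.val_succ]; omega)
        (by rw [Fin.lt_def, Fin.val_succ]; (try simp only [Fin.val_mk]) <;> omega)
      rw [get_cons_succ'] at key
      rw [get_cons_ne _ (by (try simp only [Fin.val_mk]) <;> omega) (by
          (try simp only [Fin.val_mk]) <;> omega)] at key
      rw [show (⟨((⟨((⟨0, hs0⟩ : Fin (i :: s).length) : ℕ) + 1, hi1⟩ :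
          Fin (i :: s).length) : ℕ) - 1, by (try simp only [Fin.val_mk]) <;> omega⟩ : Fin s.length)
          = ⟨0, hs⟩ from Fin.ext (by (try simp only [Fin.val_mk]) <;> omega)] at key
      exact key
  · -- head of t skipped
    right
    have hpos : ∀ m : Fin (i :: s).length, 0 < ((f m : Fin (j :: t).length) : ℕ) := by
      intro m
      by_cases hm : (m : ℕ) = 0
      · have e : m = ⟨0, hs0⟩ := Fin.ext (by (try simp only [Fin.val_mk]) <;> omega)
        rw [e]; omega
      · have hlt := hmono (show (⟨0, hs0⟩ : Fin (i :: s).length) < m from by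
          rw [Fin.lt_def]; (try simp only [Fin.val_mk]) <;> omega)
        rw [Fin.lt_def] at hlt
        omega
    have hij : i ≤ j := by
      have key := hfirst hs0 ⟨0, Nat.succ_pos _⟩
        (by rw [Fin.lt_def]; (try simp only [Fin.val_mk]) <;> omega)
      rw [get_cons_zero_val _ (Fin.val_mk _), get_cons_zero_val _ (Fin.val_mk _)] at key
      exact key
    refine ⟨hij, ⟨fun m => ⟨((f m : Fin (j :: t).length) : ℕ) - 1, by
      have := hflt m; have := hpos m; omega⟩, ?_, ?_, ?_, ?_⟩⟩
    · intro a b hab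
      dsimp only
      rw [Fin.lt_def]
      simp only [Fin.val_mk]
      have h1 := hmono hab
      rw [Fin.lt_def] at h1
      have := hpos a
      omega
    · intro m
      dsimp only
      rw [hget m]
      exact get_cons_ne (f m) (by have := hpos m; omega)
        (by have := hflt m; have := hpos m; omega)
    · intro m hm jj h1 h2
      dsimp only at h1 h2
      rw [Fin.lt_def] at h1 h2
      try simp only [Fin.val_mk] at h1 h2
      have key := hbet m hm jj.succ
        (by rw [Fin.lt_def, Fin.val_succ]; have := hpos m; omega)
        (by rw [Fin.lt_def, Fin.val_succ]; have := hpos ⟨(m : ℕ) + 1, hm⟩; omega)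
      rw [get_cons_succ'] at key
      exact key
    · intro hs jj hjj
      dsimp only at hjj
      rw [Fin.lt_def] at hjj
      try simp only [Fin.val_mk] at hjj
      have key := hfirst hs jj.succ
        (by rw [Fin.lt_def, Fin.val_succ]; have := hpos ⟨0, hs⟩; omega)
      rw [get_cons_succ'] at key
      exact key

lemma emb_iff_gapS : ∀ (t s : List ℕ), (Emb s t ↔ gapS s t) := by
  intro t
  induction t with
  | nil =>
    intro s
    cases s with
    | nil => simp [Emb, gapS_nil]
    | cons i s => simp [Emb, not_gapS_cons_nil]
  | cons j t ih =>
    intro s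
    cases s with
    | nil => simp [Emb, gapS_nil]
    | cons i s =>
      constructor
      · intro h
        rcases h with ⟨rfl, hemb⟩ | ⟨hij, hemb⟩
        · exact gapS_match ((ih s).mp hemb)
        · exact gapS_skip hij ((ih (i :: s)).mp hemb)
      · intro h
        rcases gapS_cases h with ⟨rfl, hg⟩ | ⟨hij, hg⟩
        · exact Or.inl ⟨rfl, (ih s).mpr hg⟩
        · exact Or.inr ⟨hij, (ih (i :: s)).mpr hg⟩

/-! ### Parts 1 and 2 -/

def ofSeq : List ℕ → TTerm
  | [] => TTerm.zero
  | i :: l => TTerm.theta i (ofSeq l)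

lemma toSeq_ofSeq : ∀ l : List ℕ, (ofSeq l).toSeq = l := by
  intro l
  induction l with
  | nil => rfl
  | cons i l ih => simp [ofSeq, TTerm.toSeq, ih]

lemma ofSeq_toSeq : ∀ a : TTerm, ofSeq a.toSeq = a := by
  intro a
  induction a with
  | zero => rfl
  | theta i b ih => simp [ofSeq, TTerm.toSeq, ih]

lemma barSeq_tail {n i : ℕ} {l : List ℕ} (h : barSeq n (i :: l)) : barSeq n l := by
  obtain ⟨h1, h2⟩ := h
  refine ⟨fun x hx => h1 x (List.mem_cons_of_mem _ hx), ?_⟩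
  intro m hm
  have := h2 (m + 1) (by simp only [List.length_cons]; omega)
  simpa [List.get_eq_getElem] using this

lemma memT_toSeq {n : ℕ} : ∀ a : TTerm, TTerm.memT n a → barSeq n a.toSeq := by
  intro a
  induction a with
  | zero =>
    intro _
    exact ⟨by simp [TTerm.toSeq], fun i h => by simp [TTerm.toSeq] at h⟩
  | theta i b ih =>
    rintro ⟨hwf, hbd⟩
    obtain ⟨hbn, hbdb⟩ := hbd
    have hwfb : TTerm.WF b := by cases hwf with | theta h _ => exact h
    have hS : TTerm.S b ≤ (i : ℤ) + 1 := by cases hwf with | theta _ h => exact h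
    obtain ⟨g1, g2⟩ := ih ⟨hwfb, hbdb⟩
    refine ⟨?_, ?_⟩
    · intro x hx
      simp only [TTerm.toSeq, List.mem_cons] at hx
      rcases hx with rfl | hx
      · exact hbn
      · exact g1 x hx
    · intro m hm
      simp only [TTerm.toSeq, List.length_cons] at hm
      cases m with
      | zero =>
        -- head condition
        cases b with
        | zero => simp [TTerm.toSeq] at hm
        | theta p c =>
          simp only [TTerm.S] at hS
          simp only [TTerm.toSeq, List.get_eq_getElem, List.getElem_cons_succ,
            List.getElem_cons_zero]
          exact_mod_cast hS
      | succ m =>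
        have := g2 m (by simpa [TTerm.toSeq] using hm)
        simpa [TTerm.toSeq, List.get_eq_getElem] using this

lemma memT_ofSeq {n : ℕ} : ∀ l : List ℕ, barSeq n l → TTerm.memT n (ofSeq l) := by
  intro l
  induction l with
  | nil => intro _; exact ⟨TTerm.WF.zero, trivial⟩
  | cons i l ih =>
    intro h
    obtain ⟨hwf, hbd⟩ := ih (barSeq_tail h)
    refine ⟨TTerm.WF.theta hwf ?_, h.1 i List.mem_cons_self, hbd⟩
    cases l with
    | nil => simp [ofSeq, TTerm.S]; omega
    | cons m l' =>
      have := h.2 0 (by simp)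
      simp only [List.get_eq_getElem, List.getElem_cons_succ, List.getElem_cons_zero] at this
      simp only [ofSeq, TTerm.S]
      exact_mod_cast this

/-- `(T_n, ⊴)` is order-isomorphic to `(S̄_n, ≤_gap^s)` via `toSeq`. -/
theorem stmt6 (n : ℕ) :
    (∀ α : TTerm, TTerm.memT n α → barSeq n (TTerm.toSeq α)) ∧
    (∀ l : List ℕ, barSeq n l → ∃! α : TTerm, TTerm.memT n α ∧ TTerm.toSeq α = l) ∧
    (∀ α β : TTerm, TTerm.memT n α → TTerm.memT n β →
      (TTerm.Sub α β ↔ gapS (TTerm.toSeq α) (TTerm.toSeq β))) := by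
  refine ⟨memT_toSeq, ?_, ?_⟩
  · intro l hl
    refine ⟨ofSeq l, ⟨memT_ofSeq l hl, toSeq_ofSeq l⟩, ?_⟩
    rintro y ⟨-, hy⟩
    rw [← ofSeq_toSeq y, hy]
  · intro α β _ _
    constructor
    · intro h
      exact (emb_iff_gapS _ _).mp (sub_emb h)
    · intro h
      exact emb_sub _ _ ((emb_iff_gapS _ _).mpr h)
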